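/- For every pair of integers n ≥ 1 and m ≥ 0 there is a constant C_m > 0 with the following property: if U ⊂ ℝ^n is open, g : U → ℂ is C^m on U and g is nonvanishing on U, then for every x ∈ U the m-th iterated derivative of the function 1/g satisfies ‖D^m (1/g)(x)‖ ≤ C_m · ( Σ_{k=0}^{m} ‖D^k g(x)‖ )^m / |g(x)|^{m+1}. -/

import Mathlib

open Metric Set
open Nat

/-- On an open subset of `ℂ`, the real iterated derivative of a ℂ-smooth function has the
same norm as the complex one. -/
lemma norm_iteratedFDerivWithin_real_eq_complex {f : ℂ → ℂ} {s : Set ℂ} (hs : IsOpen s)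
    {i : ℕ} (hf : ContDiffOn ℂ i f s) {z : ℂ} (hz : z ∈ s) :
    ‖iteratedFDerivWithin ℝ i f s z‖ = ‖iteratedFDerivWithin ℂ i f s z‖ := by
  have h1 := hf.ftaylorSeriesWithin hs.uniqueDiffOn
  have h2 := h1.restrictScalars ℝ
  have h3 := h2.eq_iteratedFDerivWithin_of_uniqueDiffOn le_rfl hs.uniqueDiffOn hz
  rw [← h3]
  rfl

lemma norm_iteratedFDerivWithin_inv_eq (i : ℕ) {z : ℂ} (hz : z ≠ 0) :
    ‖iteratedFDerivWithin ℝ i (fun w : ℂ => w⁻¹) {0}ᶜ z‖ = (i ! : ℝ) / ‖z‖ ^ (i + 1) := by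
  have hz' : z ∈ ({0}ᶜ : Set ℂ) := hz
  rw [norm_iteratedFDerivWithin_real_eq_complex isOpen_compl_singleton (contDiffOn_inv ℂ) hz',
    iteratedFDerivWithin_of_isOpen i isOpen_compl_singleton hz',
    norm_iteratedFDeriv_eq_norm_iteratedDeriv, iteratedDeriv_eq_iterate]
  have hfun : (Inv.inv : ℂ → ℂ) = fun w : ℂ => w ^ (-1 : ℤ) := by
    funext w; rw [zpow_neg_one]
  rw [hfun, iter_deriv_zpow, norm_mul, norm_prod, norm_zpow]
  simp only [Int.cast_neg, Int.cast_one]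
  have h1 : ∀ j ∈ Finset.range i, ‖(-1 : ℂ) - (j : ℂ)‖ = ((j + 1 : ℕ) : ℝ) := by
    intro j _
    have : (-1 : ℂ) - (j : ℂ) = -((j + 1 : ℕ) : ℂ) := by push_cast; ring
    rw [this, norm_neg, Complex.norm_natCast]
  rw [Finset.prod_congr rfl h1, ← Nat.cast_prod, Finset.prod_range_add_one_eq_factorial]
  have h2 : ((-1 : ℤ) - (i : ℤ)) = -((i : ℤ) + 1) := by ring
  have h3 : ‖z‖ ^ ((-1 : ℤ) - (i : ℤ)) = (‖z‖ ^ (i + 1))⁻¹ := by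
    rw [h2, zpow_neg, ← zpow_natCast ‖z‖ (i + 1)]
    norm_num
  rw [h3, div_eq_mul_inv]

/-- Uniform bound for iterated derivatives of a reciprocal:
`‖D^m (1/g)(x)‖ ≤ C_m (Σ_{k≤m} ‖D^k g(x)‖)^m / |g(x)|^{m+1}`, with `C_m` depending
only on `n` and `m`. -/
theorem iteratedFDeriv_inv_bound (n m : ℕ) (hn : 1 ≤ n) :
    ∃ C : ℝ, 0 < C ∧
      ∀ (U : Set (EuclideanSpace ℝ (Fin n))) (g : EuclideanSpace ℝ (Fin n) → ℂ),
        IsOpen U → ContDiffOn ℝ m g U → (∀ x ∈ U, g x ≠ 0) →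
        ∀ x ∈ U,
          ‖iteratedFDerivWithin ℝ m (fun y => (g y)⁻¹) U x‖ ≤
            C * (∑ k ∈ Finset.range (m + 1), ‖iteratedFDerivWithin ℝ k g U x‖) ^ m
              / ‖g x‖ ^ (m + 1) := by
  classical
  refine ⟨(m ! : ℝ) ^ 2, by positivity, ?_⟩
  intro U g hU hg hg0 x hx
  set S : ℝ := ∑ k ∈ Finset.range (m + 1), ‖iteratedFDerivWithin ℝ k g U x‖ with hS
  have hgx : g x ≠ 0 := hg0 x hx
  have hgx' : (0:ℝ) < ‖g x‖ := norm_pos_iff.mpr hgx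
  have hgxS : ‖g x‖ ≤ S := by
    have : ‖iteratedFDerivWithin ℝ 0 g U x‖ = ‖g x‖ := by
      simp [norm_iteratedFDerivWithin_zero]
    rw [← this]
    exact Finset.single_le_sum (f := fun k => ‖iteratedFDerivWithin ℝ k g U x‖)
      (fun k _ => norm_nonneg _) (Finset.mem_range.mpr (Nat.succ_pos m))
  have hSpos : 0 < S := lt_of_lt_of_le hgx' hgxS
  set c : ℝ := S⁻¹ with hc
  have hcpos : 0 < c := inv_pos.mpr hSpos
  set g' : EuclideanSpace ℝ (Fin n) → ℂ := fun y => c • g y with hg'def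
  have hg' : ContDiffOn ℝ m g' U := hg.const_smul c
  have hg'0 : ∀ y ∈ U, g' y ≠ 0 := fun y hy =>
    smul_ne_zero (ne_of_gt hcpos) (hg0 y hy)
  have hg'x : ‖g' x‖ = c * ‖g x‖ := by
    rw [hg'def]; simp [norm_smul, abs_of_pos hcpos]
  have hg'x1 : ‖g' x‖ ≤ 1 := by
    rw [hg'x, hc]
    calc S⁻¹ * ‖g x‖ ≤ S⁻¹ * S := by gcongr
    _ = 1 := inv_mul_cancel₀ (ne_of_gt hSpos)
  have hg'xpos : 0 < ‖g' x‖ := by rw [hg'x]; positivity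
  -- the composition
  have hinv : ContDiffOn ℝ m (Inv.inv : ℂ → ℂ) {0}ᶜ := contDiffOn_inv ℝ
  have hmaps : Set.MapsTo g' U ({0}ᶜ : Set ℂ) := fun y hy => hg'0 y hy
  have hcomp : ContDiffOn ℝ m (fun y => (g' y)⁻¹) U := hinv.comp hg' hmaps
  -- rewrite (g y)⁻¹ = c • (g' y)⁻¹
  have hkey : (fun y => (g y)⁻¹) = fun y => c • (g' y)⁻¹ := by
    funext y
    rw [hg'def]
    simp only [Complex.real_smul]
    rw [mul_inv, ← mul_assoc]
    rw [mul_inv_cancel₀ (by exact_mod_cast (ne_of_gt hcpos) : (c:ℂ) ≠ 0), one_mul]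
  have hsmul : iteratedFDerivWithin ℝ m (fun y => c • (g' y)⁻¹) U x
      = c • iteratedFDerivWithin ℝ m (fun y => (g' y)⁻¹) U x :=
    by have := iteratedFDerivWithin_const_smul_apply (a := c) (hcomp x hx) hU.uniqueDiffOn hx; exact this
  -- the composition bound
  have hC : ∀ i, i ≤ m → ‖iteratedFDerivWithin ℝ i (Inv.inv : ℂ → ℂ) {0}ᶜ (g' x)‖
      ≤ (m ! : ℝ) / ‖g' x‖ ^ (m + 1) := by
    intro i hi
    have := norm_iteratedFDerivWithin_inv_eq i (hg'0 x hx)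
    rw [show (fun w : ℂ => w⁻¹) = (Inv.inv : ℂ → ℂ) from rfl] at this
    rw [this]
    apply div_le_div₀ (by positivity)
    · exact_mod_cast Nat.factorial_le hi
    · positivity
    · exact pow_le_pow_of_le_one (le_of_lt hg'xpos) hg'x1 (Nat.succ_le_succ hi)
  have hD : ∀ i, 1 ≤ i → i ≤ m → ‖iteratedFDerivWithin ℝ i g' U x‖ ≤ (1:ℝ) ^ i := by
    intro i _ hi
    rw [one_pow]
    have hsm : iteratedFDerivWithin ℝ i g' U x = c • iteratedFDerivWithin ℝ i g U x :=
      by have := iteratedFDerivWithin_const_smul_apply (a := c) ((hg.of_le (by exact_mod_cast hi)) x hx) hU.uniqueDiffOn hx; exact this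
    rw [hsm, norm_smul, Real.norm_eq_abs, abs_of_pos hcpos]
    have hterm : ‖iteratedFDerivWithin ℝ i g U x‖ ≤ S :=
      Finset.single_le_sum (f := fun k => ‖iteratedFDerivWithin ℝ k g U x‖)
        (fun k _ => norm_nonneg _) (Finset.mem_range.mpr (by omega))
    calc c * ‖iteratedFDerivWithin ℝ i g U x‖ ≤ c * S := by gcongr
    _ = 1 := inv_mul_cancel₀ (ne_of_gt hSpos)
  have hbound : ‖iteratedFDerivWithin ℝ m (Inv.inv ∘ g') U x‖
      ≤ m ! * ((m ! : ℝ) / ‖g' x‖ ^ (m + 1)) * (1:ℝ) ^ m :=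
    norm_iteratedFDerivWithin_comp_le hinv hg' le_rfl isOpen_compl_singleton.uniqueDiffOn
      hU.uniqueDiffOn hmaps hx hC hD
  have hfin : ‖iteratedFDerivWithin ℝ m (fun y => (g y)⁻¹) U x‖
      ≤ c * (m ! * ((m ! : ℝ) / ‖g' x‖ ^ (m + 1)) * (1:ℝ) ^ m) := by
    rw [hkey, hsmul, norm_smul, Real.norm_eq_abs, abs_of_pos hcpos]
    exact mul_le_mul_of_nonneg_left hbound (le_of_lt hcpos)
  refine hfin.trans (le_of_eq ?_)
  have hS0 : S ≠ 0 := ne_of_gt hSpos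
  have hgx0 : ‖g x‖ ≠ 0 := ne_of_gt hgx'
  rw [hg'x, one_pow, mul_one, mul_pow, hc]
  field_simp [hS0, hgx0]
  rw [one_div, inv_pow, pow_succ]
  field_simp
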